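/- arXiv:1908.08407 — 4 statements merged into one kernel-verified Lean document; each statement's English description precedes it below -/
import Mathlib

section
/- Let W1, …, Wt be mutually independent discrete random variables and M any discrete random variable jointly distributed with them. Then the conditional total correlation (∑_{i=1}^t H(W_i|M)) − H(W_1,…,W_t|M) is at most H(M). -/
open Finset

def IsPMF {Ω : Type*} [Fintype Ω] (p : Ω → ℝ) : Prop :=
  (∀ ω, 0 ≤ p ω) ∧ ∑ ω, p ω = 1

noncomputable def pr {Ω : Type*} [Fintype Ω] {α : Type*} [Fintype α] [DecidableEq α]
    (p : Ω → ℝ) (X : Ω → α) (x : α) : ℝ :=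
  ∑ ω ∈ Finset.univ.filter (fun ω => X ω = x), p ω

/-- Shannon entropy (base 2) of the random variable `X` under `p`. -/
noncomputable def ent {Ω : Type*} [Fintype Ω] {α : Type*} [Fintype α] [DecidableEq α]
    (p : Ω → ℝ) (X : Ω → α) : ℝ :=
  -∑ x, pr p X x * Real.logb 2 (pr p X x)

/-- Conditional entropy H(X | U). -/
noncomputable def centH {Ω : Type*} [Fintype Ω] {α β : Type*} [Fintype α] [DecidableEq α]
    [Fintype β] [DecidableEq β] (p : Ω → ℝ) (X : Ω → α) (U : Ω → β) : ℝ :=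
  ent p (fun ω => (X ω, U ω)) - ent p U

/-- Mutual information I(X;Y). -/
noncomputable def mi {Ω : Type*} [Fintype Ω] {α β : Type*} [Fintype α] [DecidableEq α]
    [Fintype β] [DecidableEq β] (p : Ω → ℝ) (X : Ω → α) (Y : Ω → β) : ℝ :=
  ent p X + ent p Y - ent p (fun ω => (X ω, Y ω))

/-- Conditional mutual information I(X;Y|U). -/
noncomputable def cmi {Ω : Type*} [Fintype Ω] {α β γ : Type*} [Fintype α] [DecidableEq α]
    [Fintype β] [DecidableEq β] [Fintype γ] [DecidableEq γ]
    (p : Ω → ℝ) (X : Ω → α) (Y : Ω → β) (U : Ω → γ) : ℝ :=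
  centH p X U + centH p Y U - centH p (fun ω => (X ω, Y ω)) U

def IndepRV {Ω : Type*} [Fintype Ω] {α β : Type*} [Fintype α] [DecidableEq α]
    [Fintype β] [DecidableEq β] (p : Ω → ℝ) (X : Ω → α) (Y : Ω → β) : Prop :=
  ∀ x y, pr p (fun ω => (X ω, Y ω)) (x, y) = pr p X x * pr p Y y

/-- Mutual independence of the family `W`. -/
def MutIndep {Ω : Type*} [Fintype Ω] {t : ℕ} {β : Type*} [Fintype β] [DecidableEq β]
    (p : Ω → ℝ) (W : Fin t → Ω → β) : Prop :=
  ∀ w : Fin t → β, pr p (fun ω => fun i => W i ω) w = ∏ i, pr p (W i) (w i)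

section AuxLemmas

variable {Ω : Type*} [Fintype Ω] {α β : Type*} [Fintype α] [DecidableEq α]
    [Fintype β] [DecidableEq β]

lemma pr_nonneg' (p : Ω → ℝ) (h0 : ∀ ω, 0 ≤ p ω) (X : Ω → α) (x : α) : 0 ≤ pr p X x :=
  Finset.sum_nonneg fun ω _ => h0 ω

lemma pr_sum' (p : Ω → ℝ) (X : Ω → α) : ∑ x, pr p X x = ∑ ω, p ω := by
  unfold pr
  exact Finset.sum_fiberwise_of_maps_to (fun ω _ => Finset.mem_univ (X ω)) p

lemma marg_fst' (p : Ω → ℝ) (X : Ω → α) (Y : Ω → β) (x : α) :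
    ∑ y, pr p (fun ω => (X ω, Y ω)) (x, y) = pr p X x := by
  unfold pr
  rw [← Finset.sum_fiberwise_of_maps_to (s := Finset.univ.filter fun ω => X ω = x)
      (t := Finset.univ) (g := Y) (fun ω _ => Finset.mem_univ _) p]
  refine Finset.sum_congr rfl fun y _ => Finset.sum_congr ?_ fun _ _ => rfl
  ext ω
  simp [Prod.ext_iff, and_comm]

lemma marg_snd' (p : Ω → ℝ) (X : Ω → α) (Y : Ω → β) (y : β) :
    ∑ x, pr p (fun ω => (X ω, Y ω)) (x, y) = pr p Y y := by
  unfold pr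
  rw [← Finset.sum_fiberwise_of_maps_to (s := Finset.univ.filter fun ω => Y ω = y)
      (t := Finset.univ) (g := X) (fun ω _ => Finset.mem_univ _) p]
  refine Finset.sum_congr rfl fun x _ => Finset.sum_congr ?_ fun _ _ => rfl
  ext ω
  simp [Prod.ext_iff, and_comm]

lemma pr_pair_le_fst' (p : Ω → ℝ) (h0 : ∀ ω, 0 ≤ p ω) (X : Ω → α) (Y : Ω → β) (x : α) (y : β) :
    pr p (fun ω => (X ω, Y ω)) (x, y) ≤ pr p X x := by
  apply Finset.sum_le_sum_of_subset_of_nonneg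
  · intro ω hω
    simp only [Finset.mem_filter, Finset.mem_univ, true_and, Prod.ext_iff] at hω ⊢
    exact hω.1
  · exact fun ω _ _ => h0 ω

lemma pr_pair_le_snd' (p : Ω → ℝ) (h0 : ∀ ω, 0 ≤ p ω) (X : Ω → α) (Y : Ω → β) (x : α) (y : β) :
    pr p (fun ω => (X ω, Y ω)) (x, y) ≤ pr p Y y := by
  apply Finset.sum_le_sum_of_subset_of_nonneg
  · intro ω hω
    simp only [Finset.mem_filter, Finset.mem_univ, true_and, Prod.ext_iff] at hω ⊢
    exact hω.2
  · exact fun ω _ _ => h0 ω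

/-- Gibbs' inequality. -/
lemma gibbs' {ι : Type*} [Fintype ι] (q r : ι → ℝ)
    (hq : ∀ i, 0 ≤ q i) (hr : ∀ i, 0 ≤ r i)
    (hqr : ∀ i, q i ≠ 0 → r i ≠ 0) (hsum : ∑ i, r i ≤ ∑ i, q i) :
    ∑ i, q i * Real.logb 2 (r i) ≤ ∑ i, q i * Real.logb 2 (q i) := by
  have hlog2 : (0:ℝ) < Real.log 2 := Real.log_pos one_lt_two
  have key : ∀ i, q i * Real.logb 2 (r i) - q i * Real.logb 2 (q i)
      ≤ (r i - q i) / Real.log 2 := by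
    intro i
    rcases eq_or_lt_of_le (hq i) with h | h
    · rw [← h]
      simp only [zero_mul, sub_zero, sub_self]
      exact div_nonneg (hr i) (le_of_lt hlog2)
    · have hri : 0 < r i := lt_of_le_of_ne (hr i) (Ne.symm (hqr i (ne_of_gt h)))
      have hlog := Real.log_le_sub_one_of_pos (div_pos hri h)
      rw [Real.log_div (ne_of_gt hri) (ne_of_gt h)] at hlog
      have h1 : q i * (Real.log (r i) - Real.log (q i)) ≤ q i * (r i / q i - 1) :=
        mul_le_mul_of_nonneg_left hlog (le_of_lt h)
      have h2 : q i * (r i / q i - 1) = r i - q i := by field_simp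
      rw [Real.logb, Real.logb]
      calc q i * (Real.log (r i) / Real.log 2) - q i * (Real.log (q i) / Real.log 2)
          = q i * (Real.log (r i) - Real.log (q i)) / Real.log 2 := by ring
        _ ≤ (r i - q i) / Real.log 2 := by gcongr ?_ / _; linarith
  have hs := Finset.sum_le_sum (fun i (_ : i ∈ Finset.univ) => key i)
  rw [Finset.sum_sub_distrib, ← Finset.sum_div, Finset.sum_sub_distrib] at hs
  have : (∑ i, r i - ∑ i, q i) / Real.log 2 ≤ 0 :=
    div_nonpos_of_nonpos_of_nonneg (by linarith) (le_of_lt hlog2)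
  linarith

/-- Monotonicity: `H(X) ≤ H(X,Y)`. -/
lemma ent_le_ent_pair' (p : Ω → ℝ) (h0 : ∀ ω, 0 ≤ p ω) (X : Ω → α) (Y : Ω → β) :
    ent p X ≤ ent p (fun ω => (X ω, Y ω)) := by
  unfold ent
  apply neg_le_neg
  rw [Fintype.sum_prod_type]
  apply Finset.sum_le_sum
  intro x _
  have hm := marg_fst' p X Y x
  calc ∑ y, pr p (fun ω => (X ω, Y ω)) (x, y) *
        Real.logb 2 (pr p (fun ω => (X ω, Y ω)) (x, y))
      ≤ ∑ y, pr p (fun ω => (X ω, Y ω)) (x, y) * Real.logb 2 (pr p X x) := by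
        apply Finset.sum_le_sum
        intro y _
        rcases eq_or_lt_of_le (pr_nonneg' p h0 (fun ω => (X ω, Y ω)) (x, y)) with h | h
        · rw [← h]; simp
        · exact mul_le_mul_of_nonneg_left
            (Real.logb_le_logb_of_le one_lt_two h (pr_pair_le_fst' p h0 X Y x y))
            (le_of_lt h)
    _ = pr p X x * Real.logb 2 (pr p X x) := by rw [← Finset.sum_mul, hm]

/-- Subadditivity: `H(X,Y) ≤ H(X) + H(Y)`. -/
lemma ent_pair_le_add' (p : Ω → ℝ) (hp : IsPMF p) (X : Ω → α) (Y : Ω → β) :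
    ent p (fun ω => (X ω, Y ω)) ≤ ent p X + ent p Y := by
  obtain ⟨h0, h1⟩ := hp
  set q : α × β → ℝ := pr p (fun ω => (X ω, Y ω)) with hq
  set r : α × β → ℝ := fun z => pr p X z.1 * pr p Y z.2 with hr
  have hqn : ∀ z, 0 ≤ q z := fun z => pr_nonneg' p h0 _ z
  have hrn : ∀ z, 0 ≤ r z := fun z =>
    mul_nonneg (pr_nonneg' p h0 X z.1) (pr_nonneg' p h0 Y z.2)
  have hqr : ∀ z, q z ≠ 0 → r z ≠ 0 := by
    intro z hz
    have h : 0 < q z := lt_of_le_of_ne (hqn z) (Ne.symm hz)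
    have h1' : 0 < pr p X z.1 := lt_of_lt_of_le h (pr_pair_le_fst' p h0 X Y z.1 z.2)
    have h2' : 0 < pr p Y z.2 := lt_of_lt_of_le h (pr_pair_le_snd' p h0 X Y z.1 z.2)
    exact ne_of_gt (mul_pos h1' h2')
  have hsum : ∑ z, r z ≤ ∑ z, q z := by
    have e1 : ∑ z, r z = 1 := by
      rw [Fintype.sum_prod_type]
      simp only [hr]
      rw [← Finset.sum_mul_sum]
      rw [pr_sum' p X, pr_sum' p Y, h1, one_mul]
    have e2 : ∑ z, q z = 1 := by rw [hq, pr_sum' p _, h1]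
    rw [e1, e2]
  have hgibbs := gibbs' q r hqn hrn hqr hsum
  have hsplit : ∑ z, q z * Real.logb 2 (r z) = ∑ z, (q z * Real.logb 2 (pr p X z.1)
      + q z * Real.logb 2 (pr p Y z.2)) := by
    apply Finset.sum_congr rfl
    intro z _
    rcases eq_or_ne (q z) 0 with h | h
    · rw [h]; ring
    · have h1' : pr p X z.1 ≠ 0 := by
        have : 0 < q z := lt_of_le_of_ne (hqn z) (Ne.symm h)
        exact ne_of_gt (lt_of_lt_of_le this (pr_pair_le_fst' p h0 X Y z.1 z.2))
      have h2' : pr p Y z.2 ≠ 0 := by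
        have : 0 < q z := lt_of_le_of_ne (hqn z) (Ne.symm h)
        exact ne_of_gt (lt_of_lt_of_le this (pr_pair_le_snd' p h0 X Y z.1 z.2))
      rw [hr]
      show q z * Real.logb 2 (pr p X z.1 * pr p Y z.2) = _
      rw [Real.logb_mul h1' h2']
      ring
  rw [hsplit, Finset.sum_add_distrib] at hgibbs
  have hx : ∑ z : α × β, q z * Real.logb 2 (pr p X z.1)
      = ∑ x, pr p X x * Real.logb 2 (pr p X x) := by
    rw [Fintype.sum_prod_type]
    apply Finset.sum_congr rfl
    intro x _
    have he : ∀ y, q (x, y) * Real.logb 2 (pr p X (x, y).1)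
        = q (x, y) * Real.logb 2 (pr p X x) := fun y => rfl
    rw [Finset.sum_congr rfl (fun y _ => he y), ← Finset.sum_mul, marg_fst' p X Y x]
  have hy : ∑ z : α × β, q z * Real.logb 2 (pr p Y z.2)
      = ∑ y, pr p Y y * Real.logb 2 (pr p Y y) := by
    rw [Fintype.sum_prod_type, Finset.sum_comm]
    apply Finset.sum_congr rfl
    intro y _
    have he : ∀ x, q (x, y) * Real.logb 2 (pr p Y (x, y).2)
        = q (x, y) * Real.logb 2 (pr p Y y) := fun x => rfl
    rw [Finset.sum_congr rfl (fun x _ => he x), ← Finset.sum_mul, marg_snd' p X Y y]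
  rw [hx, hy] at hgibbs
  unfold ent
  linarith

/-- Additivity under mutual independence. -/
lemma ent_tuple_eq_sum' (p : Ω → ℝ) (hp : IsPMF p) {t : ℕ} (W : Fin t → Ω → β)
    (hInd : MutIndep p W) :
    ent p (fun ω => fun i => W i ω) = ∑ i, ent p (W i) := by
  obtain ⟨h0, h1⟩ := hp
  have hq1 : ∀ i, ∑ x, pr p (W i) x = 1 := fun i => (pr_sum' p (W i)).trans h1
  unfold ent
  have step1 : ∀ w : Fin t → β,
      pr p (fun ω => fun i => W i ω) w * Real.logb 2 (pr p (fun ω => fun i => W i ω) w)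
      = ∑ j, (∏ i, pr p (W i) (w i)) * Real.logb 2 (pr p (W j) (w j)) := by
    intro w
    rw [hInd w]
    by_cases h : ∃ i, pr p (W i) (w i) = 0
    · obtain ⟨i, hi⟩ := h
      have hz : ∏ i, pr p (W i) (w i) = 0 := Finset.prod_eq_zero (Finset.mem_univ i) hi
      simp [hz]
    · push_neg at h
      rw [Real.logb_prod _ _ (fun i _ => h i), Finset.mul_sum]
  calc -∑ w, pr p (fun ω => fun i => W i ω) w *
        Real.logb 2 (pr p (fun ω => fun i => W i ω) w)
      = -∑ w : Fin t → β, ∑ j, (∏ i, pr p (W i) (w i)) * Real.logb 2 (pr p (W j) (w j)) := by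
        rw [Finset.sum_congr rfl (fun w _ => step1 w)]
    _ = -∑ j, ∑ w : Fin t → β, (∏ i, pr p (W i) (w i)) * Real.logb 2 (pr p (W j) (w j)) := by
        rw [Finset.sum_comm]
    _ = ∑ j, -(∑ x, pr p (W j) x * Real.logb 2 (pr p (W j) x)) := by
        rw [← Finset.sum_neg_distrib]
        apply Finset.sum_congr rfl
        intro j _
        congr 1
        set g : Fin t → β → ℝ := fun i x =>
          if i = j then pr p (W i) x * Real.logb 2 (pr p (W i) x) else pr p (W i) x with hg
        have hfac : ∀ w : Fin t → β,
            (∏ i, pr p (W i) (w i)) * Real.logb 2 (pr p (W j) (w j))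
            = ∏ i, g i (w i) := by
          intro w
          have h1 : (∏ i, pr p (W i) (w i))
              = pr p (W j) (w j) * ∏ i ∈ Finset.univ.erase j, pr p (W i) (w i) :=
            (Finset.mul_prod_erase _ _ (Finset.mem_univ j)).symm
          have h2 : (∏ i, g i (w i))
              = (pr p (W j) (w j) * Real.logb 2 (pr p (W j) (w j)))
                * ∏ i ∈ Finset.univ.erase j, pr p (W i) (w i) := by
            rw [← Finset.mul_prod_erase _ (fun i => g i (w i)) (Finset.mem_univ j)]
            have hj : g j (w j) = pr p (W j) (w j) * Real.logb 2 (pr p (W j) (w j)) := by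
              rw [hg]; exact if_pos rfl
            rw [hj]
            congr 1
            refine Finset.prod_congr rfl fun i hi => ?_
            rw [hg]
            exact if_neg (Finset.mem_erase.mp hi).1
          rw [h1, h2]
          ring
        rw [Finset.sum_congr rfl (fun w _ => hfac w), ← Fintype.piFinset_univ,
            ← Finset.prod_univ_sum]
        rw [Finset.prod_eq_single j ?h1 ?h2]
        · refine Finset.sum_congr rfl fun x _ => ?_
          rw [hg]; exact if_pos rfl
        case h1 =>
          intro i _ hi
          have : ∀ x, g i x = pr p (W i) x := fun x => by rw [hg]; exact if_neg hi
          rw [Finset.sum_congr rfl (fun x _ => this x), hq1 i]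
        case h2 =>
          intro h
          exact absurd (Finset.mem_univ j) h

end AuxLemmas

/-- If `W₁,…,W_t` are mutually independent, then
`∑ᵢ H(Wᵢ|M) − H(W₁,…,W_t|M) ≤ H(M)`. -/
theorem stmt3 {Ω β γ : Type*} [Fintype Ω] [Fintype β] [DecidableEq β]
    [Fintype γ] [DecidableEq γ] {t : ℕ}
    (p : Ω → ℝ) (hp : IsPMF p) (W : Fin t → Ω → β) (M : Ω → γ)
    (hInd : MutIndep p W) :
    (∑ i, centH p (W i) M) - centH p (fun ω => fun i => W i ω) M ≤ ent p M := by
  have h0 := hp.1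
  have hA : ∀ i : Fin t, ent p (fun ω => (W i ω, M ω)) ≤ ent p (W i) + ent p M :=
    fun i => ent_pair_le_add' p hp (W i) M
  have hB : ent p (fun ω => fun i => W i ω)
      ≤ ent p (fun ω => ((fun i => W i ω), M ω)) :=
    ent_le_ent_pair' p h0 (fun ω => fun i => W i ω) M
  have hC : ent p (fun ω => fun i => W i ω) = ∑ i, ent p (W i) :=
    ent_tuple_eq_sum' p hp W hInd
  simp only [centH]
  have hAsum : ∑ i, ent p (fun ω => (W i ω, M ω))
      ≤ ∑ i, (ent p (W i) + ent p M) :=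
    Finset.sum_le_sum fun i _ => hA i
  rw [Finset.sum_add_distrib] at hAsum
  rw [Finset.sum_sub_distrib]
  have hcard : ∑ _i : Fin t, ent p M = (t : ℝ) * ent p M := by
    rw [Finset.sum_const, Finset.card_univ, Fintype.card_fin, nsmul_eq_mul]
  linarith [hcard, hAsum, hB, hC]
end

section
/- Fix H ≥ 0 and t ≥ 1. Define region A as the set of nonnegative tuples (R,R_1,…,R_t) for which there exist nonnegative reals r, r_1,…,r_t with: R ≥ (∑_{j≠i} r_j) + r for all i ∈ [1:t], H ≤ r + ∑_{j=1}^t r_j, and R_j ≥ r_j for all j. Define region B as the set of nonnegative tuples satisfying R + min{R_1,…,R_t} ≥ H and R ≥ (t−1)H/t. Then A = B. -/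
open Finset

/-- Fourier–Motzkin elimination for the individually-shared-randomness region with
equal outputs: region A (with auxiliary rates `r, r₁,…,r_t`) equals region B
(given by `R + min{R₁,…,R_t} ≥ H` and `R ≥ (t−1)H/t`). -/
theorem stmt7 (t : ℕ) (ht : 1 ≤ t) (H : ℝ) (hH : 0 ≤ H)
    (R : ℝ) (R' : Fin t → ℝ) (hR : 0 ≤ R) (hR' : ∀ i, 0 ≤ R' i) :
    (∃ r : ℝ, ∃ r' : Fin t → ℝ, 0 ≤ r ∧ (∀ j, 0 ≤ r' j) ∧
        (∀ i : Fin t, (∑ j ∈ Finset.univ.erase i, r' j) + r ≤ R) ∧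
        H ≤ r + ∑ j, r' j ∧ (∀ j, r' j ≤ R' j))
    ↔ (H ≤ R + Finset.univ.inf' ⟨⟨0, ht⟩, Finset.mem_univ _⟩ R'
        ∧ ((t : ℝ) - 1) * H / t ≤ R) := by
  have ht1 : (1:ℝ) ≤ t := by exact_mod_cast ht
  have htR : (0:ℝ) < t := by linarith
  set m := Finset.univ.inf' ⟨⟨0, ht⟩, Finset.mem_univ _⟩ R' with hm
  have hm_le : ∀ i, m ≤ R' i := fun i => Finset.inf'_le _ (Finset.mem_univ i)
  have hm_nonneg : 0 ≤ m := Finset.le_inf' _ _ fun i _ => hR' i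
  have hcard : ∀ i : Fin t, ((Finset.univ.erase i).card : ℝ) = (t:ℝ) - 1 := by
    intro i
    rw [Finset.card_erase_of_mem (Finset.mem_univ i), Finset.card_univ, Fintype.card_fin,
      Nat.cast_sub ht, Nat.cast_one]
  constructor
  · rintro ⟨r, r', hr, hr', h1, h2, h3⟩
    obtain ⟨i₀, -, hi₀⟩ := Finset.exists_mem_eq_inf' (⟨⟨0, ht⟩, Finset.mem_univ _⟩ :
      (Finset.univ : Finset (Fin t)).Nonempty) R'
    have hsplit : ∀ i : Fin t, (∑ j ∈ Finset.univ.erase i, r' j) + r' i = ∑ j, r' j :=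
      fun i => Finset.sum_erase_add _ _ (Finset.mem_univ i)
    constructor
    · have := h1 i₀
      have h3' := h3 i₀
      have := hsplit i₀
      rw [hm, hi₀]
      linarith
    · -- sum all the inequalities
      have hsum : ∑ i : Fin t, ((∑ j ∈ Finset.univ.erase i, r' j) + r)
          ≤ ∑ _i : Fin t, R := Finset.sum_le_sum fun i _ => h1 i
      have hL : ∑ i : Fin t, ((∑ j ∈ Finset.univ.erase i, r' j) + r)
          = ((t:ℝ) - 1) * (∑ j, r' j) + (t:ℝ) * r := by
        have : ∀ i : Fin t, (∑ j ∈ Finset.univ.erase i, r' j) + r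
            = (∑ j, r' j) - r' i + r := by
          intro i; have := hsplit i; linarith
        rw [Finset.sum_congr rfl fun i _ => this i]
        simp [Finset.sum_sub_distrib, Finset.sum_add_distrib, Finset.card_univ, sub_mul]
      have hRsum : ∑ _i : Fin t, R = (t:ℝ) * R := by
        simp [Finset.card_univ, mul_comm]
      rw [hL, hRsum] at hsum
      have hsum' : ∀ j, 0 ≤ r' j := hr'
      have hS : 0 ≤ ∑ j, r' j := Finset.sum_nonneg fun j _ => hr' j
      rw [div_le_iff₀ htR]
      nlinarith [mul_nonneg (by linarith : (0:ℝ) ≤ (t:ℝ) - 1)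
        (by linarith : (0:ℝ) ≤ r + ∑ j, r' j - H)]
  · rintro ⟨hb1, hb2⟩
    refine ⟨H - (t:ℝ) * min m (H / t), fun _ => min m (H / t), ?_, ?_, ?_, ?_, ?_⟩
    · have : (t:ℝ) * min m (H / t) ≤ (t:ℝ) * (H / t) :=
        mul_le_mul_of_nonneg_left (min_le_right _ _) (le_of_lt htR)
      rw [mul_div_cancel₀ _ (ne_of_gt htR)] at this
      linarith
    · intro j; exact le_min hm_nonneg (by positivity)
    · intro i
      rw [Finset.sum_const, nsmul_eq_mul, hcard i]
      rcases le_total m (H / t) with h | h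
      · rw [min_eq_left h]
        linarith
      · rw [min_eq_right h]
        have hc : (t:ℝ) * (H / t) = H := mul_div_cancel₀ _ (ne_of_gt htR)
        rw [mul_div_assoc] at hb2
        linarith
    · rw [Finset.sum_const, nsmul_eq_mul, Finset.card_univ, Fintype.card_fin]
      linarith
    · intro j; exact le_trans (min_le_left _ _) (hm_le j)
end

section
/- Fix H ≥ 0 and t ≥ 1. Define region A as the set of nonnegative tuples (R,R_1,…,R_t) for which there exist nonnegative reals r, r_1,…,r_t with: R ≥ r_i + r for all i ∈ [1:t], H ≤ r + ∑_{j=1}^t r_j, and R_j ≥ r_j for all j. Define region B as the set of nonnegative tuples satisfying, for every i ∈ [1:t] and every subset S ⊊ [1:t] with |S| = t−i, the inequality i·R + ∑_{j∈S} R_j ≥ H. Then A = B. -/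
open Finset

/-- Polyhedral equivalence for the randomness-on-the-forehead region with equal
outputs: region A (with auxiliary rates `r, r₁,…,r_t`) equals region B given by
`i·R + ∑_{j∈S} R_j ≥ H` for every `i ∈ [1:t]` and every `S ⊊ [1:t]` with `|S| = t−i`. -/
theorem stmt8 (t : ℕ) (ht : 1 ≤ t) (H : ℝ) (hH : 0 ≤ H)
    (R : ℝ) (R' : Fin t → ℝ) (hR : 0 ≤ R) (hR' : ∀ i, 0 ≤ R' i) :
    (∃ r : ℝ, ∃ r' : Fin t → ℝ, 0 ≤ r ∧ (∀ j, 0 ≤ r' j) ∧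
        (∀ i : Fin t, r' i + r ≤ R) ∧
        H ≤ r + ∑ j, r' j ∧ (∀ j, r' j ≤ R' j))
    ↔ (∀ i : ℕ, 1 ≤ i → i ≤ t → ∀ S : Finset (Fin t), S ⊂ Finset.univ →
        S.card = t - i → H ≤ (i : ℝ) * R + ∑ j ∈ S, R' j) := by
  constructor
  · rintro ⟨r, r', hr, hr', hrR, hHs, hrR'⟩ i hi1 hit S hS hScard
    have hcompl : Sᶜ.card = i := by
      rw [Finset.card_compl, Fintype.card_fin, hScard]
      omega
    have hsplit : ∑ j, r' j = ∑ j ∈ S, r' j + ∑ j ∈ Sᶜ, r' j :=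
      (Finset.sum_add_sum_compl S r').symm
    have h1 : ∑ j ∈ S, r' j ≤ ∑ j ∈ S, R' j :=
      Finset.sum_le_sum fun j _ => hrR' j
    have h2 : ∑ j ∈ Sᶜ, r' j ≤ (i : ℝ) * (R - r) := by
      calc ∑ j ∈ Sᶜ, r' j ≤ ∑ _j ∈ Sᶜ, (R - r) :=
            Finset.sum_le_sum fun j _ => by linarith [hrR j]
        _ = (Sᶜ.card : ℝ) * (R - r) := by
            rw [Finset.sum_const, nsmul_eq_mul]
        _ = (i : ℝ) * (R - r) := by rw [hcompl]
    have hi1' : (1 : ℝ) ≤ (i : ℝ) := by exact_mod_cast hi1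
    nlinarith [hHs, hsplit, h1, h2, hr]
  · intro hB
    set T : Finset (Fin t) := Finset.univ.filter (fun j => R < R' j) with hT
    by_cases hTe : T = ∅
    · -- all R' j ≤ R : take r = R - max, r' = R'
      have hall : ∀ j, R' j ≤ R := by
        intro j
        by_contra h
        have : j ∈ T := by simp [hT, lt_of_not_ge h]
        simp [hTe] at this
      have hne : (Finset.univ : Finset (Fin t)).Nonempty := by
        have : Nonempty (Fin t) := ⟨⟨0, ht⟩⟩
        exact Finset.univ_nonempty
      obtain ⟨j₀, _, hj₀⟩ := Finset.exists_max_image Finset.univ R' hne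
      refine ⟨R - R' j₀, R', by linarith [hall j₀], hR', ?_, ?_, fun j => le_rfl⟩
      · intro j; have := hj₀ j (Finset.mem_univ j); linarith
      · have hprop : Finset.univ.erase j₀ ⊂ (Finset.univ : Finset (Fin t)) :=
          Finset.erase_ssubset (Finset.mem_univ j₀)
        have hcard : (Finset.univ.erase j₀).card = t - 1 := by
          rw [Finset.card_erase_of_mem (Finset.mem_univ j₀), Finset.card_univ,
            Fintype.card_fin]
        have := hB 1 le_rfl ht (Finset.univ.erase j₀) hprop hcard
        have hsum : ∑ j ∈ Finset.univ.erase j₀, R' j = ∑ j, R' j - R' j₀ := by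
          rw [Finset.sum_erase_eq_sub (Finset.mem_univ j₀)]
        push_cast at this
        linarith
    · -- T nonempty: r = 0, r' j = min (R' j) R
      have hTne : T.Nonempty := Finset.nonempty_of_ne_empty hTe
      have hk1 : 1 ≤ T.card := Finset.card_pos.mpr hTne
      have hkt : T.card ≤ t := by
        have := Finset.card_le_card (Finset.subset_univ T)
        simpa using this
      refine ⟨0, fun j => min (R' j) R, le_rfl, fun j => le_min (hR' j) hR, ?_, ?_,
        fun j => min_le_left _ _⟩
      · intro j; simpa using min_le_right (R' j) R
      · have hprop : Tᶜ ⊂ (Finset.univ : Finset (Fin t)) := by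
          rw [Finset.ssubset_univ_iff]
          intro h
          obtain ⟨x, hx⟩ := hTne
          have : x ∈ Tᶜ := h ▸ Finset.mem_univ x
          exact (Finset.mem_compl.mp this) hx
        have hcard : (Tᶜ).card = t - T.card := by
          rw [Finset.card_compl, Fintype.card_fin]
        have hB' := hB T.card hk1 hkt Tᶜ hprop hcard
        have hsplit : ∑ j, min (R' j) R =
            ∑ j ∈ T, min (R' j) R + ∑ j ∈ Tᶜ, min (R' j) R :=
          (Finset.sum_add_sum_compl T _).symm
        have h1 : ∑ j ∈ T, min (R' j) R = (T.card : ℝ) * R := by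
          rw [Finset.sum_congr rfl (fun j hj => ?_), Finset.sum_const, nsmul_eq_mul]
          have : R < R' j := by simpa [hT] using hj
          exact min_eq_right this.le
        have h2 : ∑ j ∈ Tᶜ, min (R' j) R = ∑ j ∈ Tᶜ, R' j := by
          refine Finset.sum_congr rfl fun j hj => ?_
          have : ¬ R < R' j := by
            have := Finset.mem_compl.mp hj
            simpa [hT] using this
          exact min_eq_left (le_of_not_gt this)
        linarith
end

section
/- Let f1, f2 : P → ℝ be the functions on the set P of conditional pmfs p(u|x,y) (with |U| ≤ |X||Y|+2) given by f1(p) = I(X;Y|U) and f2(p) = I(X,Y;U), for a fixed joint pmf q on X×Y. Then min over p of max{f1(p), (f1(p)+f2(p))/2} equals min over p of max{f1(p), f2(p)}. -/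
open Finset

/-- A conditional pmf `w(u|x,y)`. -/
def CondPMF {X Y U : Type*} [Fintype U] (w : X → Y → U → ℝ) : Prop :=
  (∀ x y u, 0 ≤ w x y u) ∧ ∀ x y, ∑ u, w x y u = 1

/-- The joint pmf `q(x,y) w(u|x,y)` on `X × Y × U`. -/
noncomputable def jointQ {X Y U : Type*} (q : X × Y → ℝ) (w : X → Y → U → ℝ) :
    X × Y × U → ℝ := fun ω => q (ω.1, ω.2.1) * w ω.1 ω.2.1 ω.2.2

/-- I(X;Y|U) under the joint pmf `q(x,y) w(u|x,y)`. -/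
noncomputable def cmiXY {X Y U : Type*} [Fintype X] [DecidableEq X] [Fintype Y] [DecidableEq Y]
    [Fintype U] [DecidableEq U] (q : X × Y → ℝ) (w : X → Y → U → ℝ) : ℝ :=
  cmi (jointQ q w) (fun ω => ω.1) (fun ω => ω.2.1) (fun ω => ω.2.2)

/-- I(X,Y;U) under the joint pmf `q(x,y) w(u|x,y)`. -/
noncomputable def miXYU {X Y U : Type*} [Fintype X] [DecidableEq X] [Fintype Y] [DecidableEq Y]
    [Fintype U] [DecidableEq U] (q : X × Y → ℝ) (w : X → Y → U → ℝ) : ℝ :=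
  mi (jointQ q w) (fun ω => (ω.1, ω.2.1)) (fun ω => ω.2.2)


set_option linter.unusedSectionVars false

namespace Stmt9A

noncomputable def Hent {S : Type*} [Fintype S] (μ : S → ℝ) : ℝ :=
  -∑ s, μ s * Real.logb 2 (μ s)

lemma mul_logb_split {a b : ℝ} (ha : 0 ≤ a) (hb : 0 ≤ b) :
    (a * b) * Real.logb 2 (a * b)
      = b * (a * Real.logb 2 a) + a * (b * Real.logb 2 b) := by
  rcases ha.eq_or_lt with h | h
  · simp [← h]
  rcases hb.eq_or_lt with h' | h'
  · simp [← h']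
  rw [Real.logb_mul h.ne' h'.ne']; ring

lemma mul_logb_mul {c a b : ℝ} (h : c ≠ 0 → a ≠ 0 ∧ b ≠ 0) :
    c * Real.logb 2 (a * b) = c * Real.logb 2 a + c * Real.logb 2 b := by
  rcases eq_or_ne c 0 with rfl | hc
  · simp
  · rw [Real.logb_mul (h hc).1 (h hc).2]; ring

lemma mul_logb_div {c a b : ℝ} (h : c ≠ 0 → a ≠ 0 ∧ b ≠ 0) :
    c * Real.logb 2 (a / b) = c * Real.logb 2 a - c * Real.logb 2 b := by
  rcases eq_or_ne c 0 with rfl | hc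
  · simp
  · rw [Real.logb_div (h hc).1 (h hc).2]; ring

lemma gibbs {ι : Type*} [Fintype ι] (A B : ι → ℝ) (hA : ∀ i, 0 ≤ A i)
    (hB : ∀ i, 0 ≤ B i) (hAB : ∀ i, 0 < A i → 0 < B i)
    (hs : ∑ i, B i ≤ ∑ i, A i) :
    ∑ i, A i * Real.logb 2 (B i) ≤ ∑ i, A i * Real.logb 2 (A i) := by
  have hlog2 : (0:ℝ) < Real.log 2 := Real.log_pos one_lt_two
  have key : ∀ i, A i * Real.logb 2 (B i) - A i * Real.logb 2 (A i)
      ≤ (B i - A i) / Real.log 2 := by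
    intro i
    rcases (hA i).eq_or_lt with h | h
    · have h0 : 0 ≤ B i / Real.log 2 := div_nonneg (hB i) hlog2.le
      simpa [← h] using h0
    · have hBi := hAB i h
      have hrw : A i * Real.logb 2 (B i) - A i * Real.logb 2 (A i)
          = (A i * Real.log (B i / A i)) / Real.log 2 := by
        rw [Real.log_div hBi.ne' h.ne', Real.logb, Real.logb]; ring
      rw [hrw]
      have h2 : Real.log (B i / A i) ≤ B i / A i - 1 :=
        Real.log_le_sub_one_of_pos (by positivity)
      have h3 : A i * Real.log (B i / A i) ≤ B i - A i := by
        have := mul_le_mul_of_nonneg_left h2 h.le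
        have hx : A i * (B i / A i - 1) = B i - A i := by field_simp
        linarith [hx ▸ this]
      gcongr
  have h4 : ∑ i, (B i - A i) / Real.log 2 = (∑ i, B i - ∑ i, A i) / Real.log 2 := by
    rw [← Finset.sum_div, Finset.sum_sub_distrib]
  have h5 : (∑ i, B i - ∑ i, A i) / Real.log 2 ≤ 0 :=
    div_nonpos_of_nonpos_of_nonneg (by linarith) hlog2.le
  have h4' : ∑ i, ((B i - A i) / Real.log 2) ≤ 0 := by rw [h4]; exact h5
  have h6 : ∑ i, (A i * Real.logb 2 (B i) - A i * Real.logb 2 (A i)) ≤ 0 :=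
    le_trans (Finset.sum_le_sum (s := Finset.univ) (fun i _ => key i)) h4'
  rw [Finset.sum_sub_distrib] at h6
  linarith


section Main
variable {X Y : Type*} [Fintype X] [DecidableEq X] [Fintype Y] [DecidableEq Y]

/-- Marginal on `X`. -/
noncomputable def mXm (μ : X × Y → ℝ) : X → ℝ := fun x => ∑ y, μ (x, y)

/-- Marginal on `Y`. -/
noncomputable def mYm (μ : X × Y → ℝ) : Y → ℝ := fun y => ∑ x, μ (x, y)

/-- Mutual information of a joint pmf on `X × Y`. -/
noncomputable def IA (μ : X × Y → ℝ) : ℝ := Hent (mXm μ) + Hent (mYm μ) - Hent μ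

lemma sum_mXm (μ : X × Y → ℝ) (f : X → ℝ) :
    ∑ x, mXm μ x * f x = ∑ s : X × Y, μ s * f s.1 := by
  rw [Fintype.sum_prod_type]
  exact Finset.sum_congr rfl fun x _ => by rw [mXm, Finset.sum_mul]

lemma sum_mYm (μ : X × Y → ℝ) (f : Y → ℝ) :
    ∑ y, mYm μ y * f y = ∑ s : X × Y, μ s * f s.2 := by
  rw [Fintype.sum_prod_type_right]
  exact Finset.sum_congr rfl fun y _ => by rw [mYm, Finset.sum_mul]

lemma mXm_nonneg {μ : X × Y → ℝ} (hμ : ∀ s, 0 ≤ μ s) (x : X) : 0 ≤ mXm μ x :=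
  Finset.sum_nonneg fun y _ => hμ (x, y)

lemma mYm_nonneg {μ : X × Y → ℝ} (hμ : ∀ s, 0 ≤ μ s) (y : Y) : 0 ≤ mYm μ y :=
  Finset.sum_nonneg fun x _ => hμ (x, y)

lemma le_mXm {μ : X × Y → ℝ} (hμ : ∀ s, 0 ≤ μ s) (s : X × Y) : μ s ≤ mXm μ s.1 := by
  have := Finset.single_le_sum (f := fun y => μ (s.1, y)) (fun y _ => hμ _)
    (Finset.mem_univ s.2)
  simpa [mXm] using this

lemma le_mYm {μ : X × Y → ℝ} (hμ : ∀ s, 0 ≤ μ s) (s : X × Y) : μ s ≤ mYm μ s.2 := by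
  have := Finset.single_le_sum (f := fun x => μ (x, s.2)) (fun x _ => hμ _)
    (Finset.mem_univ s.1)
  simpa [mYm] using this

lemma sum_mXm_one {μ : X × Y → ℝ} (h1 : ∑ s, μ s = 1) : ∑ x, mXm μ x = 1 := by
  rw [← h1, Fintype.sum_prod_type]; rfl

lemma sum_mYm_one {μ : X × Y → ℝ} (h1 : ∑ s, μ s = 1) : ∑ y, mYm μ y = 1 := by
  rw [← h1, Fintype.sum_prod_type_right]; rfl

/-- `I(X;Y) ≥ 0` for a joint pmf. -/
lemma IA_nonneg {μ : X × Y → ℝ} (hμ : IsPMF μ) : 0 ≤ IA μ := by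
  obtain ⟨h0, h1⟩ := hμ
  have hg := gibbs μ (fun s => mXm μ s.1 * mYm μ s.2) h0
    (fun s => mul_nonneg (mXm_nonneg h0 s.1) (mYm_nonneg h0 s.2))
    (fun s hs => mul_pos (lt_of_lt_of_le hs (le_mXm h0 s)) (lt_of_lt_of_le hs (le_mYm h0 s)))
    (by
      rw [h1]
      have : ∑ s : X × Y, mXm μ s.1 * mYm μ s.2
          = (∑ x, mXm μ x) * (∑ y, mYm μ y) := by
        rw [Fintype.sum_prod_type, Finset.sum_mul]
        exact Finset.sum_congr rfl fun x _ => by rw [Finset.mul_sum]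
      rw [this, sum_mXm_one h1, sum_mYm_one h1, one_mul])
  have hsplit : ∑ s : X × Y, μ s * Real.logb 2 (mXm μ s.1 * mYm μ s.2)
      = ∑ s : X × Y, μ s * Real.logb 2 (mXm μ s.1)
        + ∑ s : X × Y, μ s * Real.logb 2 (mYm μ s.2) := by
    rw [← Finset.sum_add_distrib]
    refine Finset.sum_congr rfl fun s _ => mul_logb_mul fun hc => ?_
    have hpos : 0 < μ s := lt_of_le_of_ne (h0 s) (Ne.symm hc)
    exact ⟨(lt_of_lt_of_le hpos (le_mXm h0 s)).ne', (lt_of_lt_of_le hpos (le_mYm h0 s)).ne'⟩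
  rw [hsplit] at hg
  have e1 : ∑ s : X × Y, μ s * Real.logb 2 (mXm μ s.1) = -Hent (mXm μ) := by
    rw [Hent, neg_neg, sum_mXm]
  have e2 : ∑ s : X × Y, μ s * Real.logb 2 (mYm μ s.2) = -Hent (mYm μ) := by
    rw [Hent, neg_neg, sum_mYm]
  rw [e1, e2] at hg
  have e3 : ∑ s, μ s * Real.logb 2 (μ s) = -Hent μ := by rw [Hent, neg_neg]
  rw [e3] at hg
  rw [IA]; linarith


section Atoms
variable {U : Type*} [Fintype U] [DecidableEq U]
variable {q : X × Y → ℝ} {π : U → ℝ} {Q : U → X × Y → ℝ}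

lemma q_nonneg (hπ : IsPMF π) (hQ : ∀ u, IsPMF (Q u))
    (hbar : ∀ s, ∑ u, π u * Q u s = q s) (s : X × Y) : 0 ≤ q s := by
  rw [← hbar s]
  exact Finset.sum_nonneg fun u _ => mul_nonneg (hπ.1 u) ((hQ u).1 s)

lemma q_sum_one (hπ : IsPMF π) (hQ : ∀ u, IsPMF (Q u))
    (hbar : ∀ s, ∑ u, π u * Q u s = q s) : ∑ s, q s = 1 := by
  have : ∑ s : X × Y, ∑ u, π u * Q u s = 1 := by
    rw [Finset.sum_comm]
    rw [show ∑ u, ∑ s : X × Y, π u * Q u s = ∑ u, π u from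
      Finset.sum_congr rfl fun u _ => by rw [← Finset.mul_sum, (hQ u).2, mul_one]]
    exact hπ.2
  rw [← this]
  exact Finset.sum_congr rfl fun s _ => (hbar s).symm

lemma le_q (hπ : IsPMF π) (hQ : ∀ u, IsPMF (Q u))
    (hbar : ∀ s, ∑ u, π u * Q u s = q s) (u : U) (s : X × Y) :
    π u * Q u s ≤ q s := by
  rw [← hbar s]
  exact Finset.single_le_sum
    (f := fun v => π v * Q v s)
    (fun v _ => mul_nonneg (hπ.1 v) ((hQ v).1 s)) (Finset.mem_univ u)

lemma sumA_total (hπ : IsPMF π) (hQ : ∀ u, IsPMF (Q u)) :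
    ∑ p : U × (X × Y), π p.1 * Q p.1 p.2 = 1 := by
  rw [Fintype.sum_prod_type]
  rw [show ∑ u, ∑ s : X × Y, π u * Q u s = ∑ u, π u from
    Finset.sum_congr rfl fun u _ => by rw [← Finset.mul_sum, (hQ u).2, mul_one]]
  exact hπ.2

lemma sum_coef_left (g : U → ℝ) (hQ : ∀ u, IsPMF (Q u)) :
    ∑ p : U × (X × Y), (π p.1 * Q p.1 p.2) * g p.1 = ∑ u, π u * g u := by
  rw [Fintype.sum_prod_type]
  refine Finset.sum_congr rfl fun u _ => ?_
  rw [show ∑ s : X × Y, π u * Q u s * g u = (π u * g u) * ∑ s : X × Y, Q u s by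
    rw [Finset.mul_sum]; exact Finset.sum_congr rfl fun s _ => by ring]
  rw [(hQ u).2, mul_one]

lemma sum_coef_right (f : X × Y → ℝ) (hbar : ∀ s, ∑ u, π u * Q u s = q s) :
    ∑ p : U × (X × Y), (π p.1 * Q p.1 p.2) * f p.2 = ∑ s, q s * f s := by
  rw [Fintype.sum_prod_type, Finset.sum_comm]
  refine Finset.sum_congr rfl fun s _ => ?_
  rw [← hbar s, Finset.sum_mul]

lemma sumA_logbA (hπ : IsPMF π) (hQ : ∀ u, IsPMF (Q u)) :
    ∑ p : U × (X × Y), (π p.1 * Q p.1 p.2) * Real.logb 2 (π p.1 * Q p.1 p.2)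
      = ∑ u, π u * Real.logb 2 (π u) - ∑ u, π u * Hent (Q u) := by
  rw [Fintype.sum_prod_type]
  rw [show ∑ u, ∑ s : X × Y, (π u * Q u s) * Real.logb 2 (π u * Q u s)
      = ∑ u, (π u * Real.logb 2 (π u) - π u * Hent (Q u)) from
    Finset.sum_congr rfl fun u _ => by
      rw [Finset.sum_congr rfl fun s _ => mul_logb_split (hπ.1 u) ((hQ u).1 s),
        Finset.sum_add_distrib, ← Finset.sum_mul, ← Finset.mul_sum, (hQ u).2, one_mul,
        Hent, mul_neg]
      ring]
  rw [Finset.sum_sub_distrib]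

/-- Concavity of entropy: `∑ π u H(Q u) ≤ H(q)`. -/
lemma F2_nonneg (hπ : IsPMF π) (hQ : ∀ u, IsPMF (Q u))
    (hbar : ∀ s, ∑ u, π u * Q u s = q s) :
    ∑ u, π u * Hent (Q u) ≤ Hent q := by
  have hq0 := q_nonneg hπ hQ hbar
  have hg := gibbs (ι := U × (X × Y)) (fun p => π p.1 * Q p.1 p.2)
    (fun p => π p.1 * q p.2)
    (fun p => mul_nonneg (hπ.1 p.1) ((hQ p.1).1 p.2))
    (fun p => mul_nonneg (hπ.1 p.1) (hq0 p.2))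
    (fun p hp => by
      have h1 : 0 < π p.1 ∧ 0 < Q p.1 p.2 := by
        rcases mul_pos_iff.mp hp with h | h
        · exact h
        · exact absurd h.1 (not_lt.mpr (hπ.1 p.1))
      exact mul_pos h1.1 (lt_of_lt_of_le hp (le_q hπ hQ hbar p.1 p.2)))
    (by
      rw [sumA_total hπ hQ]
      rw [show ∑ p : U × (X × Y), π p.1 * q p.2 = (∑ u, π u) * ∑ s, q s by
        rw [Fintype.sum_prod_type, Finset.sum_mul]
        exact Finset.sum_congr rfl fun u _ => by rw [Finset.mul_sum]]
      rw [hπ.2, q_sum_one hπ hQ hbar, one_mul])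
  have hsplit : ∑ p : U × (X × Y), (π p.1 * Q p.1 p.2) * Real.logb 2 (π p.1 * q p.2)
      = ∑ p : U × (X × Y), (π p.1 * Q p.1 p.2) * Real.logb 2 (π p.1)
        + ∑ p : U × (X × Y), (π p.1 * Q p.1 p.2) * Real.logb 2 (q p.2) := by
    rw [← Finset.sum_add_distrib]
    refine Finset.sum_congr rfl fun p _ => mul_logb_mul fun hc => ?_
    have hpos : 0 < π p.1 * Q p.1 p.2 :=
      lt_of_le_of_ne (mul_nonneg (hπ.1 p.1) ((hQ p.1).1 p.2)) (Ne.symm hc)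
    have h1 : 0 < π p.1 := by
      rcases mul_pos_iff.mp hpos with h | h
      · exact h.1
      · exact absurd h.1 (not_lt.mpr (hπ.1 p.1))
    exact ⟨h1.ne', (lt_of_lt_of_le hpos (le_q hπ hQ hbar p.1 p.2)).ne'⟩
  rw [hsplit, sum_coef_left (fun u => Real.logb 2 (π u)) hQ,
    sum_coef_right (fun s => Real.logb 2 (q s)) hbar, sumA_logbA hπ hQ] at hg
  have e3 : ∑ s, q s * Real.logb 2 (q s) = -Hent q := by rw [Hent, neg_neg]
  rw [e3] at hg
  linarith


lemma sum_coef_fun (g : U → X × Y → ℝ) :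
    ∑ p : U × (X × Y), (π p.1 * Q p.1 p.2) * g p.1 p.2
      = ∑ u, π u * ∑ s, Q u s * g u s := by
  rw [Fintype.sum_prod_type]
  refine Finset.sum_congr rfl fun u _ => ?_
  rw [Finset.mul_sum]
  exact Finset.sum_congr rfl fun s _ => by ring

/-- Concavity of conditional entropy, `X`-version. -/
lemma condX (hπ : IsPMF π) (hQ : ∀ u, IsPMF (Q u))
    (hbar : ∀ s, ∑ u, π u * Q u s = q s) :
    Hent (mXm q) - ∑ u, π u * Hent (mXm (Q u)) ≤ Hent q - ∑ u, π u * Hent (Q u) := by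
  have hq0 := q_nonneg hπ hQ hbar
  set B : U × (X × Y) → ℝ :=
    fun p => (π p.1 * mXm (Q p.1) p.2.1) * (q p.2 / mXm q p.2.1) with hB
  have hBnn : ∀ p, 0 ≤ B p := fun p =>
    mul_nonneg (mul_nonneg (hπ.1 p.1) (mXm_nonneg (hQ p.1).1 p.2.1))
      (div_nonneg (hq0 p.2) (mXm_nonneg hq0 p.2.1))
  have hApos : ∀ p : U × (X × Y), 0 < π p.1 * Q p.1 p.2 →
      0 < π p.1 ∧ 0 < Q p.1 p.2 ∧ 0 < mXm (Q p.1) p.2.1 ∧ 0 < q p.2 ∧ 0 < mXm q p.2.1 := by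
    intro p hp
    have h1 : 0 < π p.1 ∧ 0 < Q p.1 p.2 := by
      rcases mul_pos_iff.mp hp with h | h
      · exact h
      · exact absurd h.1 (not_lt.mpr (hπ.1 p.1))
    have h2 : 0 < q p.2 := lt_of_lt_of_le hp (le_q hπ hQ hbar p.1 p.2)
    exact ⟨h1.1, h1.2, lt_of_lt_of_le h1.2 (le_mXm (hQ p.1).1 p.2),
      h2, lt_of_lt_of_le h2 (le_mXm hq0 p.2)⟩
  have hg := gibbs (ι := U × (X × Y)) (fun p => π p.1 * Q p.1 p.2) B
    (fun p => mul_nonneg (hπ.1 p.1) ((hQ p.1).1 p.2)) hBnn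
    (fun p hp => by
      obtain ⟨w1, w2, w3, w4, w5⟩ := hApos p hp
      exact mul_pos (mul_pos w1 w3) (div_pos w4 w5))
    (by
      rw [sumA_total hπ hQ]
      have step : ∀ u : U, ∑ s : X × Y, B (u, s) ≤ π u := by
        intro u
        have : ∑ s : X × Y, B (u, s)
            = ∑ x, (π u * mXm (Q u) x) * ((∑ y, q (x, y)) / mXm q x) := by
          rw [Fintype.sum_prod_type]
          refine Finset.sum_congr rfl fun x _ => ?_
          rw [Finset.sum_div, Finset.mul_sum]
        rw [this]
        calc ∑ x, (π u * mXm (Q u) x) * ((∑ y, q (x, y)) / mXm q x)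
            ≤ ∑ x, (π u * mXm (Q u) x) * 1 := by
              refine Finset.sum_le_sum fun x _ => ?_
              refine mul_le_mul_of_nonneg_left ?_
                (mul_nonneg (hπ.1 u) (mXm_nonneg (hQ u).1 x))
              rw [show (∑ y, q (x, y)) = mXm q x from rfl]
              exact div_self_le_one _
          _ = π u := by
              simp only [mul_one]
              rw [← Finset.mul_sum, sum_mXm_one (hQ u).2, mul_one]
      calc ∑ p : U × (X × Y), B p = ∑ u, ∑ s : X × Y, B (u, s) := by
            rw [Fintype.sum_prod_type]
        _ ≤ ∑ u, π u := Finset.sum_le_sum fun u _ => step u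
        _ = 1 := hπ.2)
  have hsplit : ∑ p : U × (X × Y), (π p.1 * Q p.1 p.2) * Real.logb 2 (B p)
      = ∑ p : U × (X × Y), (π p.1 * Q p.1 p.2) * Real.logb 2 (π p.1)
        + ∑ p : U × (X × Y), (π p.1 * Q p.1 p.2) * Real.logb 2 (mXm (Q p.1) p.2.1)
        + ∑ p : U × (X × Y), (π p.1 * Q p.1 p.2) * Real.logb 2 (q p.2)
        - ∑ p : U × (X × Y), (π p.1 * Q p.1 p.2) * Real.logb 2 (mXm q p.2.1) := by
    rw [← Finset.sum_add_distrib, ← Finset.sum_add_distrib, ← Finset.sum_sub_distrib]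
    refine Finset.sum_congr rfl fun p _ => ?_
    set c := π p.1 * Q p.1 p.2 with hc
    rcases eq_or_ne c 0 with h0 | h0
    · simp [hB, h0]
    have hpos : 0 < c :=
      lt_of_le_of_ne (mul_nonneg (hπ.1 p.1) ((hQ p.1).1 p.2)) (Ne.symm h0)
    obtain ⟨w1, w2, w3, w4, w5⟩ := hApos p hpos
    rw [hB]
    rw [mul_logb_mul (a := π p.1 * mXm (Q p.1) p.2.1) (b := q p.2 / mXm q p.2.1)
      (fun _ => ⟨(mul_pos w1 w3).ne', (div_pos w4 w5).ne'⟩)]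
    rw [mul_logb_mul (a := π p.1) (b := mXm (Q p.1) p.2.1)
      (fun _ => ⟨w1.ne', w3.ne'⟩)]
    rw [mul_logb_div (a := q p.2) (b := mXm q p.2.1) (fun _ => ⟨w4.ne', w5.ne'⟩)]
    ring
  have e1 : ∑ p : U × (X × Y), (π p.1 * Q p.1 p.2) * Real.logb 2 (mXm (Q p.1) p.2.1)
      = ∑ u, π u * (- Hent (mXm (Q u))) := by
    rw [sum_coef_fun (fun u s => Real.logb 2 (mXm (Q u) s.1))]
    refine Finset.sum_congr rfl fun u _ => ?_
    rw [show ∑ s : X × Y, Q u s * Real.logb 2 (mXm (Q u) s.1)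
        = ∑ x, mXm (Q u) x * Real.logb 2 (mXm (Q u) x) from
      (sum_mXm (Q u) (fun x => Real.logb 2 (mXm (Q u) x))).symm]
    rw [Hent, neg_neg]
  have e2 : ∑ p : U × (X × Y), (π p.1 * Q p.1 p.2) * Real.logb 2 (q p.2) = - Hent q := by
    rw [sum_coef_right (fun s => Real.logb 2 (q s)) hbar, Hent, neg_neg]
  have e3 : ∑ p : U × (X × Y), (π p.1 * Q p.1 p.2) * Real.logb 2 (mXm q p.2.1)
      = - Hent (mXm q) := by
    rw [sum_coef_right (fun s => Real.logb 2 (mXm q s.1)) hbar]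
    rw [show ∑ s : X × Y, q s * Real.logb 2 (mXm q s.1)
        = ∑ x, mXm q x * Real.logb 2 (mXm q x) from
      (sum_mXm q (fun x => Real.logb 2 (mXm q x))).symm]
    rw [Hent, neg_neg]
  rw [hsplit, sum_coef_left (fun u => Real.logb 2 (π u)) hQ, e1, e2, e3,
    sumA_logbA hπ hQ] at hg
  have e4 : ∑ u, π u * (- Hent (mXm (Q u))) = -∑ u, π u * Hent (mXm (Q u)) := by
    rw [← Finset.sum_neg_distrib]
    exact Finset.sum_congr rfl fun u _ => by ring
  rw [e4] at hg
  linarith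

/-- Concavity of conditional entropy, `Y`-version. -/
lemma condY (hπ : IsPMF π) (hQ : ∀ u, IsPMF (Q u))
    (hbar : ∀ s, ∑ u, π u * Q u s = q s) :
    Hent (mYm q) - ∑ u, π u * Hent (mYm (Q u)) ≤ Hent q - ∑ u, π u * Hent (Q u) := by
  have hq0 := q_nonneg hπ hQ hbar
  set B : U × (X × Y) → ℝ :=
    fun p => (π p.1 * mYm (Q p.1) p.2.2) * (q p.2 / mYm q p.2.2) with hB
  have hBnn : ∀ p, 0 ≤ B p := fun p =>
    mul_nonneg (mul_nonneg (hπ.1 p.1) (mYm_nonneg (hQ p.1).1 p.2.2))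
      (div_nonneg (hq0 p.2) (mYm_nonneg hq0 p.2.2))
  have hApos : ∀ p : U × (X × Y), 0 < π p.1 * Q p.1 p.2 →
      0 < π p.1 ∧ 0 < Q p.1 p.2 ∧ 0 < mYm (Q p.1) p.2.2 ∧ 0 < q p.2 ∧ 0 < mYm q p.2.2 := by
    intro p hp
    have h1 : 0 < π p.1 ∧ 0 < Q p.1 p.2 := by
      rcases mul_pos_iff.mp hp with h | h
      · exact h
      · exact absurd h.1 (not_lt.mpr (hπ.1 p.1))
    have h2 : 0 < q p.2 := lt_of_lt_of_le hp (le_q hπ hQ hbar p.1 p.2)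
    exact ⟨h1.1, h1.2, lt_of_lt_of_le h1.2 (le_mYm (hQ p.1).1 p.2),
      h2, lt_of_lt_of_le h2 (le_mYm hq0 p.2)⟩
  have hg := gibbs (ι := U × (X × Y)) (fun p => π p.1 * Q p.1 p.2) B
    (fun p => mul_nonneg (hπ.1 p.1) ((hQ p.1).1 p.2)) hBnn
    (fun p hp => by
      obtain ⟨w1, w2, w3, w4, w5⟩ := hApos p hp
      exact mul_pos (mul_pos w1 w3) (div_pos w4 w5))
    (by
      rw [sumA_total hπ hQ]
      have step : ∀ u : U, ∑ s : X × Y, B (u, s) ≤ π u := by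
        intro u
        have : ∑ s : X × Y, B (u, s)
            = ∑ y, (π u * mYm (Q u) y) * ((∑ x, q (x, y)) / mYm q y) := by
          rw [Fintype.sum_prod_type_right]
          refine Finset.sum_congr rfl fun y _ => ?_
          rw [Finset.sum_div, Finset.mul_sum]
        rw [this]
        calc ∑ y, (π u * mYm (Q u) y) * ((∑ x, q (x, y)) / mYm q y)
            ≤ ∑ y, (π u * mYm (Q u) y) * 1 := by
              refine Finset.sum_le_sum fun y _ => ?_
              refine mul_le_mul_of_nonneg_left ?_
                (mul_nonneg (hπ.1 u) (mYm_nonneg (hQ u).1 y))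
              rw [show (∑ x, q (x, y)) = mYm q y from rfl]
              exact div_self_le_one _
          _ = π u := by
              simp only [mul_one]
              rw [← Finset.mul_sum, sum_mYm_one (hQ u).2, mul_one]
      calc ∑ p : U × (X × Y), B p = ∑ u, ∑ s : X × Y, B (u, s) := by
            rw [Fintype.sum_prod_type]
        _ ≤ ∑ u, π u := Finset.sum_le_sum fun u _ => step u
        _ = 1 := hπ.2)
  have hsplit : ∑ p : U × (X × Y), (π p.1 * Q p.1 p.2) * Real.logb 2 (B p)
      = ∑ p : U × (X × Y), (π p.1 * Q p.1 p.2) * Real.logb 2 (π p.1)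
        + ∑ p : U × (X × Y), (π p.1 * Q p.1 p.2) * Real.logb 2 (mYm (Q p.1) p.2.2)
        + ∑ p : U × (X × Y), (π p.1 * Q p.1 p.2) * Real.logb 2 (q p.2)
        - ∑ p : U × (X × Y), (π p.1 * Q p.1 p.2) * Real.logb 2 (mYm q p.2.2) := by
    rw [← Finset.sum_add_distrib, ← Finset.sum_add_distrib, ← Finset.sum_sub_distrib]
    refine Finset.sum_congr rfl fun p _ => ?_
    set c := π p.1 * Q p.1 p.2 with hc
    rcases eq_or_ne c 0 with h0 | h0
    · simp [hB, h0]
    have hpos : 0 < c :=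
      lt_of_le_of_ne (mul_nonneg (hπ.1 p.1) ((hQ p.1).1 p.2)) (Ne.symm h0)
    obtain ⟨w1, w2, w3, w4, w5⟩ := hApos p hpos
    rw [hB]
    rw [mul_logb_mul (a := π p.1 * mYm (Q p.1) p.2.2) (b := q p.2 / mYm q p.2.2)
      (fun _ => ⟨(mul_pos w1 w3).ne', (div_pos w4 w5).ne'⟩)]
    rw [mul_logb_mul (a := π p.1) (b := mYm (Q p.1) p.2.2)
      (fun _ => ⟨w1.ne', w3.ne'⟩)]
    rw [mul_logb_div (a := q p.2) (b := mYm q p.2.2) (fun _ => ⟨w4.ne', w5.ne'⟩)]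
    ring
  have e1 : ∑ p : U × (X × Y), (π p.1 * Q p.1 p.2) * Real.logb 2 (mYm (Q p.1) p.2.2)
      = ∑ u, π u * (- Hent (mYm (Q u))) := by
    rw [sum_coef_fun (fun u s => Real.logb 2 (mYm (Q u) s.2))]
    refine Finset.sum_congr rfl fun u _ => ?_
    rw [show ∑ s : X × Y, Q u s * Real.logb 2 (mYm (Q u) s.2)
        = ∑ y, mYm (Q u) y * Real.logb 2 (mYm (Q u) y) from
      (sum_mYm (Q u) (fun y => Real.logb 2 (mYm (Q u) y))).symm]
    rw [Hent, neg_neg]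
  have e2 : ∑ p : U × (X × Y), (π p.1 * Q p.1 p.2) * Real.logb 2 (q p.2) = - Hent q := by
    rw [sum_coef_right (fun s => Real.logb 2 (q s)) hbar, Hent, neg_neg]
  have e3 : ∑ p : U × (X × Y), (π p.1 * Q p.1 p.2) * Real.logb 2 (mYm q p.2.2)
      = - Hent (mYm q) := by
    rw [sum_coef_right (fun s => Real.logb 2 (mYm q s.2)) hbar]
    rw [show ∑ s : X × Y, q s * Real.logb 2 (mYm q s.2)
        = ∑ y, mYm q y * Real.logb 2 (mYm q y) from
      (sum_mYm q (fun y => Real.logb 2 (mYm q y))).symm]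
    rw [Hent, neg_neg]
  rw [hsplit, sum_coef_left (fun u => Real.logb 2 (π u)) hQ, e1, e2, e3,
    sumA_logbA hπ hQ] at hg
  have e4 : ∑ u, π u * (- Hent (mYm (Q u))) = -∑ u, π u * Hent (mYm (Q u)) := by
    rw [← Finset.sum_neg_distrib]
    exact Finset.sum_congr rfl fun u _ => by ring
  rw [e4] at hg
  linarith



/-- `I(X;Y|U)` in atom form. -/
noncomputable def F1v (π : U → ℝ) (Q : U → X × Y → ℝ) : ℝ := ∑ u, π u * IA (Q u)

/-- `I(X,Y;U)` in atom form. -/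
noncomputable def F2v (q : X × Y → ℝ) (π : U → ℝ) (Q : U → X × Y → ℝ) : ℝ :=
  Hent q - ∑ u, π u * Hent (Q u)

lemma F1v_nonneg (hπ : IsPMF π) (hQ : ∀ u, IsPMF (Q u)) : 0 ≤ F1v π Q :=
  Finset.sum_nonneg fun u _ => mul_nonneg (hπ.1 u) (IA_nonneg (hQ u))

lemma F2v_nonneg (hπ : IsPMF π) (hQ : ∀ u, IsPMF (Q u))
    (hbar : ∀ s, ∑ u, π u * Q u s = q s) : 0 ≤ F2v q π Q := by
  have := F2_nonneg hπ hQ hbar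
  rw [F2v]; linarith

lemma IA_le_sum (hπ : IsPMF π) (hQ : ∀ u, IsPMF (Q u))
    (hbar : ∀ s, ∑ u, π u * Q u s = q s) : IA q ≤ F1v π Q + F2v q π Q := by
  have hx := condX hπ hQ hbar
  have hy := condY hπ hQ hbar
  have hsplit : F1v π Q = ∑ u, π u * Hent (mXm (Q u)) + ∑ u, π u * Hent (mYm (Q u))
      - ∑ u, π u * Hent (Q u) := by
    rw [F1v, ← Finset.sum_add_distrib, ← Finset.sum_sub_distrib]
    exact Finset.sum_congr rfl fun u _ => by rw [IA]; ring
  rw [IA, F2v, hsplit]; linarith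


/-- The product-form joint distribution on `X × Y × U`. -/
noncomputable def PJ (π : U → ℝ) (Q : U → X × Y → ℝ) : X × Y × U → ℝ :=
  fun ω => π ω.2.2 * Q ω.2.2 (ω.1, ω.2.1)

lemma pr_Ucoord (hQ : ∀ u, IsPMF (Q u)) (u : U) :
    pr (PJ π Q) (fun ω => ω.2.2) u = π u := by
  rw [pr]
  rw [Finset.sum_bij' (i := fun (ω : X × Y × U) _ => ((ω.1, ω.2.1) : X × Y))
    (j := fun (s : X × Y) _ => ((s.1, s.2, u) : X × Y × U))
    (t := Finset.univ) (g := fun s : X × Y => π u * Q u s)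
    (by simp) (by simp) (by simp +contextual [Prod.ext_iff])
    (by simp) (by simp +contextual [PJ, Prod.ext_iff])]
  rw [← Finset.mul_sum, (hQ u).2, mul_one]

lemma pr_XUcoord (hQ : ∀ u, IsPMF (Q u)) (x : X) (u : U) :
    pr (PJ π Q) (fun ω => (ω.1, ω.2.2)) (x, u) = π u * mXm (Q u) x := by
  rw [pr]
  rw [Finset.sum_bij' (i := fun (ω : X × Y × U) _ => (ω.2.1 : Y))
    (j := fun (y : Y) _ => ((x, y, u) : X × Y × U))
    (t := Finset.univ) (g := fun y : Y => π u * Q u (x, y))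
    (by simp) (by simp [Prod.ext_iff]) (by simp +contextual [Prod.ext_iff])
    (by simp) (by simp +contextual [PJ, Prod.ext_iff])]
  rw [← Finset.mul_sum]; rfl

lemma pr_YUcoord (hQ : ∀ u, IsPMF (Q u)) (y : Y) (u : U) :
    pr (PJ π Q) (fun ω => (ω.2.1, ω.2.2)) (y, u) = π u * mYm (Q u) y := by
  rw [pr]
  rw [Finset.sum_bij' (i := fun (ω : X × Y × U) _ => (ω.1 : X))
    (j := fun (a : X) _ => ((a, y, u) : X × Y × U))
    (t := Finset.univ) (g := fun a : X => π u * Q u (a, y))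
    (by simp) (by simp [Prod.ext_iff]) (by simp +contextual [Prod.ext_iff])
    (by simp) (by simp +contextual [PJ, Prod.ext_iff])]
  rw [← Finset.mul_sum]; rfl

lemma pr_XYcoord (hbar : ∀ s, ∑ u, π u * Q u s = q s) (s : X × Y) :
    pr (PJ π Q) (fun ω => (ω.1, ω.2.1)) s = q s := by
  rw [pr]
  rw [Finset.sum_bij' (i := fun (ω : X × Y × U) _ => (ω.2.2 : U))
    (j := fun (u : U) _ => ((s.1, s.2, u) : X × Y × U))
    (t := Finset.univ) (g := fun u : U => π u * Q u s)
    (by simp) (by simp [Prod.ext_iff]) (by simp +contextual [Prod.ext_iff])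
    (by simp) (by simp +contextual [PJ, Prod.ext_iff])]
  exact hbar s

lemma pr_paircoord (s : X × Y) (u : U) :
    pr (PJ π Q) (fun ω => ((ω.1, ω.2.1), ω.2.2)) (s, u) = π u * Q u s := by
  rw [pr]
  rw [show Finset.univ.filter (fun ω : X × Y × U => ((ω.1, ω.2.1), ω.2.2) = (s, u))
      = {(s.1, s.2, u)} by
    ext ω; simp [Prod.ext_iff]; tauto]
  rw [Finset.sum_singleton]; rfl


lemma ent_split {S : Type*} [Fintype S] (π : U → ℝ) (D : U → S → ℝ)
    (hπ : ∀ u, 0 ≤ π u) (hD : ∀ u s, 0 ≤ D u s) (hD1 : ∀ u, ∑ s, D u s = 1) :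
    -∑ u, ∑ s, (π u * D u s) * Real.logb 2 (π u * D u s)
      = Hent π + ∑ u, π u * Hent (D u) := by
  rw [show ∑ u, ∑ s, (π u * D u s) * Real.logb 2 (π u * D u s)
      = ∑ u, (π u * Real.logb 2 (π u) + π u * (∑ s, D u s * Real.logb 2 (D u s))) from
    Finset.sum_congr rfl fun u _ => by
      rw [Finset.sum_congr rfl fun s _ => mul_logb_split (hπ u) (hD u s),
        Finset.sum_add_distrib, ← Finset.sum_mul, ← Finset.mul_sum, hD1 u, one_mul]]
  rw [Finset.sum_add_distrib, neg_add, Hent]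
  congr 1
  rw [show ∑ u, π u * Hent (D u) = ∑ u, π u * -(∑ s, D u s * Real.logb 2 (D u s)) from
    Finset.sum_congr rfl fun u _ => by rw [Hent]]
  rw [← Finset.sum_neg_distrib]
  exact Finset.sum_congr rfl fun u _ => by ring

lemma ent_U (hπ : IsPMF π) (hQ : ∀ u, IsPMF (Q u)) :
    ent (PJ π Q) (fun ω => ω.2.2) = Hent π := by
  rw [ent, Hent]
  congr 1
  exact Finset.sum_congr rfl fun u _ => by rw [pr_Ucoord hQ u]

lemma ent_XU (hπ : IsPMF π) (hQ : ∀ u, IsPMF (Q u)) :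
    ent (PJ π Q) (fun ω => (ω.1, ω.2.2)) = Hent π + ∑ u, π u * Hent (mXm (Q u)) := by
  rw [ent]
  rw [show ∑ a : X × U, pr (PJ π Q) (fun ω => (ω.1, ω.2.2)) a
        * Real.logb 2 (pr (PJ π Q) (fun ω => (ω.1, ω.2.2)) a)
      = ∑ u, ∑ x, (π u * mXm (Q u) x) * Real.logb 2 (π u * mXm (Q u) x) by
    rw [Fintype.sum_prod_type, Finset.sum_comm]
    exact Finset.sum_congr rfl fun u _ => Finset.sum_congr rfl fun x _ => by
      rw [pr_XUcoord hQ x u]]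
  exact ent_split π (fun u => mXm (Q u)) hπ.1 (fun u x => mXm_nonneg (hQ u).1 x)
    (fun u => sum_mXm_one (hQ u).2)

lemma ent_YU (hπ : IsPMF π) (hQ : ∀ u, IsPMF (Q u)) :
    ent (PJ π Q) (fun ω => (ω.2.1, ω.2.2)) = Hent π + ∑ u, π u * Hent (mYm (Q u)) := by
  rw [ent]
  rw [show ∑ a : Y × U, pr (PJ π Q) (fun ω => (ω.2.1, ω.2.2)) a
        * Real.logb 2 (pr (PJ π Q) (fun ω => (ω.2.1, ω.2.2)) a)
      = ∑ u, ∑ y, (π u * mYm (Q u) y) * Real.logb 2 (π u * mYm (Q u) y) by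
    rw [Fintype.sum_prod_type, Finset.sum_comm]
    exact Finset.sum_congr rfl fun u _ => Finset.sum_congr rfl fun y _ => by
      rw [pr_YUcoord hQ y u]]
  exact ent_split π (fun u => mYm (Q u)) hπ.1 (fun u y => mYm_nonneg (hQ u).1 y)
    (fun u => sum_mYm_one (hQ u).2)

lemma ent_XYU (hπ : IsPMF π) (hQ : ∀ u, IsPMF (Q u)) :
    ent (PJ π Q) (fun ω => ((ω.1, ω.2.1), ω.2.2)) = Hent π + ∑ u, π u * Hent (Q u) := by
  rw [ent]
  rw [show ∑ a : (X × Y) × U, pr (PJ π Q) (fun ω => ((ω.1, ω.2.1), ω.2.2)) a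
        * Real.logb 2 (pr (PJ π Q) (fun ω => ((ω.1, ω.2.1), ω.2.2)) a)
      = ∑ u, ∑ s : X × Y, (π u * Q u s) * Real.logb 2 (π u * Q u s) by
    rw [Fintype.sum_prod_type, Finset.sum_comm]
    exact Finset.sum_congr rfl fun u _ => Finset.sum_congr rfl fun s _ => by
      rw [pr_paircoord s u]]
  exact ent_split π Q hπ.1 (fun u s => (hQ u).1 s) (fun u => (hQ u).2)

lemma ent_XY (hbar : ∀ s, ∑ u, π u * Q u s = q s) :
    ent (PJ π Q) (fun ω => (ω.1, ω.2.1)) = Hent q := by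
  rw [ent, Hent]
  congr 1
  exact Finset.sum_congr rfl fun s _ => by rw [pr_XYcoord hbar s]

/-- The main computation: the information quantities of a channel in atom form. -/
lemma vals (hπ : IsPMF π) (hQ : ∀ u, IsPMF (Q u)) (hbar : ∀ s, ∑ u, π u * Q u s = q s)
    (w : X → Y → U → ℝ) (hw : ∀ x y u, q (x, y) * w x y u = π u * Q u (x, y)) :
    cmiXY q w = F1v π Q ∧ miXYU q w = F2v q π Q := by
  have hPJ : jointQ q w = PJ π Q := by
    funext ω; exact hw ω.1 ω.2.1 ω.2.2
  have hsplit : F1v π Q = ∑ u, π u * Hent (mXm (Q u)) + ∑ u, π u * Hent (mYm (Q u))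
      - ∑ u, π u * Hent (Q u) := by
    rw [F1v, ← Finset.sum_add_distrib, ← Finset.sum_sub_distrib]
    exact Finset.sum_congr rfl fun u _ => by rw [IA]; ring
  constructor
  · rw [cmiXY, hPJ]
    simp only [cmi, centH]
    rw [ent_U hπ hQ, ent_XU hπ hQ, ent_YU hπ hQ, ent_XYU hπ hQ, hsplit]
    ring
  · rw [miXYU, hPJ]
    simp only [mi]
    rw [ent_U hπ hQ, ent_XYU hπ hQ, ent_XY hbar, F2v]
    ring


/-- Channel realizing given atoms. -/
noncomputable def chanOf (q : X × Y → ℝ) (π : U → ℝ) (Q : U → X × Y → ℝ) (u₀ : U) :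
    X → Y → U → ℝ :=
  fun x y u => if q (x, y) = 0 then (if u = u₀ then 1 else 0) else π u * Q u (x, y) / q (x, y)

lemma chanOf_spec (hπ : IsPMF π) (hQ : ∀ u, IsPMF (Q u))
    (hbar : ∀ s, ∑ u, π u * Q u s = q s) (u₀ : U) :
    CondPMF (chanOf q π Q u₀) ∧
      ∀ x y u, q (x, y) * chanOf q π Q u₀ x y u = π u * Q u (x, y) := by
  have hterm0 : ∀ x y u, q (x, y) = 0 → π u * Q u (x, y) = 0 := by
    intro x y u h0
    have hsum : ∑ v, π v * Q v (x, y) = 0 := by rw [hbar]; exact h0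
    exact (Finset.sum_eq_zero_iff_of_nonneg
      (fun v _ => mul_nonneg (hπ.1 v) ((hQ v).1 _))).mp hsum u (Finset.mem_univ u)
  refine ⟨⟨?_, ?_⟩, ?_⟩
  · intro x y u
    rw [chanOf]
    split
    · split <;> norm_num
    · next h =>
      exact div_nonneg (mul_nonneg (hπ.1 u) ((hQ u).1 _))
        (q_nonneg hπ hQ hbar (x, y))
  · intro x y
    rcases eq_or_ne (q (x, y)) 0 with h | h
    · simp [chanOf, h]
    · simp only [chanOf, if_neg h]
      rw [← Finset.sum_div, hbar, div_self h]
  · intro x y u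
    rcases eq_or_ne (q (x, y)) 0 with h | h
    · rw [h, zero_mul, hterm0 x y u h]
    · simp only [chanOf, if_neg h]
      field_simp

/-- Extraction of atoms from a channel. -/
lemma extract (hq : IsPMF q) (w : X → Y → U → ℝ) (hw : CondPMF w) :
    ∃ π : U → ℝ, ∃ Q : U → X × Y → ℝ, IsPMF π ∧ (∀ u, IsPMF (Q u)) ∧
      (∀ s, ∑ u, π u * Q u s = q s) ∧
      ∀ x y u, q (x, y) * w x y u = π u * Q u (x, y) := by
  classical
  set π : U → ℝ := fun u => ∑ s : X × Y, q s * w s.1 s.2 u with hπdef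
  set Q : U → X × Y → ℝ :=
    fun u s => if π u = 0 then q s else q s * w s.1 s.2 u / π u with hQdef
  have hπ0 : ∀ u, 0 ≤ π u :=
    fun u => Finset.sum_nonneg fun s _ => mul_nonneg (hq.1 s) (hw.1 s.1 s.2 u)
  have hprod : ∀ x y u, q (x, y) * w x y u = π u * Q u (x, y) := by
    intro x y u
    by_cases hu : π u = 0
    · have h0 : q (x, y) * w x y u = 0 := by
        have := (Finset.sum_eq_zero_iff_of_nonneg
          (fun s (_ : s ∈ Finset.univ) => mul_nonneg (hq.1 s) (hw.1 s.1 s.2 u))).mp hu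
          (x, y) (Finset.mem_univ _)
        exact this
      rw [h0, hu, zero_mul]
    · simp only [hQdef, if_neg hu]
      field_simp
  refine ⟨π, Q, ⟨hπ0, ?_⟩, ?_, ?_, hprod⟩
  · rw [hπdef]
    rw [Finset.sum_comm]
    rw [show ∑ s : X × Y, ∑ u, q s * w s.1 s.2 u = ∑ s : X × Y, q s from
      Finset.sum_congr rfl fun s _ => by rw [← Finset.mul_sum, hw.2 s.1 s.2, mul_one]]
    exact hq.2
  · intro u
    constructor
    · intro s
      rw [hQdef]
      dsimp only
      split
      · exact hq.1 s
      · exact div_nonneg (mul_nonneg (hq.1 s) (hw.1 s.1 s.2 u)) (hπ0 u)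
    · rw [hQdef]
      dsimp only
      by_cases hu : π u = 0
      · simp only [hu, if_true, ite_true]
        simpa using hq.2
      · simp only [hu, if_false, ite_false]
        rw [← Finset.sum_div]
        exact div_self hu
  · intro s
    rw [show ∑ u, π u * Q u s = ∑ u, q s * w s.1 s.2 u from
      Finset.sum_congr rfl fun u _ => (hprod s.1 s.2 u).symm]
    rw [← Finset.mul_sum, hw.2 s.1 s.2, mul_one]


/-- The barycenter linear map. -/
noncomputable def barMap (Q : U → X × Y → ℝ) : (U → ℝ) →ₗ[ℝ] (X × Y → ℝ) where
  toFun z := fun s => ∑ u, z u * Q u s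
  map_add' a b := by
    funext s
    simp only [Pi.add_apply]
    rw [← Finset.sum_add_distrib]
    exact Finset.sum_congr rfl fun u _ => by simp [add_mul]
  map_smul' c a := by
    funext s
    simp [Finset.mul_sum, mul_assoc]

/-- A linear functional given by coefficients. -/
noncomputable def linF (a : U → ℝ) : (U → ℝ) →ₗ[ℝ] ℝ where
  toFun z := ∑ u, z u * a u
  map_add' x y := by
    simp only [Pi.add_apply]
    rw [← Finset.sum_add_distrib]
    exact Finset.sum_congr rfl fun u _ => by simp [add_mul]
  map_smul' c x := by
    simp [Finset.mul_sum, mul_assoc]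

lemma exists_dir (hcard : Fintype.card (X × Y) + 2 ≤ Fintype.card U)
    (Q : U → X × Y → ℝ) (a b : U → ℝ) :
    ∃ z : U → ℝ, z ≠ 0 ∧ (∀ s, ∑ u, z u * Q u s = 0) ∧
      0 ≤ ∑ u, z u * a u ∧ ∑ u, z u * b u ≤ 0 := by
  classical
  set K := LinearMap.ker (barMap Q) with hK
  have hKge : 2 ≤ Module.finrank ℝ K := by
    have h1 := (barMap Q).finrank_range_add_finrank_ker
    have h2 : Module.finrank ℝ (U → ℝ) = Fintype.card U := Module.finrank_pi ℝ
    have h3 : Module.finrank ℝ (LinearMap.range (barMap Q))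
        ≤ Fintype.card (X × Y) := by
      have h4 : Module.finrank ℝ (X × Y → ℝ) = Fintype.card (X × Y) :=
        Module.finrank_pi ℝ
      have := Submodule.finrank_le (LinearMap.range (barMap Q))
      omega
    rw [hK]
    omega
  set T : K →ₗ[ℝ] ℝ × ℝ :=
    ((linF a).comp K.subtype).prod ((linF b).comp K.subtype) with hT
  have hmemker : ∀ z : K, ∀ s, ∑ u, (z : U → ℝ) u * Q u s = 0 := by
    intro z s
    have := z.2
    rw [LinearMap.mem_ker] at this
    exact congrFun this s
  by_cases hker : LinearMap.ker T = ⊥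
  · have hinj : Function.Injective T := LinearMap.ker_eq_bot.mp hker
    have hfr2 : Module.finrank ℝ (ℝ × ℝ) = 2 := by
      rw [Module.finrank_prod, Module.finrank_self]
    have hle : Module.finrank ℝ K ≤ 2 := by
      have := LinearMap.finrank_le_finrank_of_injective hinj
      omega
    have hsurj : Function.Surjective T := by
      rw [← LinearMap.range_eq_top]
      apply Submodule.eq_top_of_finrank_eq
      rw [LinearMap.finrank_range_of_inj hinj, hfr2]
      omega
    obtain ⟨z, hz⟩ := hsurj (1, -1)
    have hz1 : linF a (z : U → ℝ) = 1 := congrArg Prod.fst hz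
    have hz2 : linF b (z : U → ℝ) = -1 := congrArg Prod.snd hz
    refine ⟨(z : U → ℝ), ?_, hmemker z, ?_, ?_⟩
    · intro h0
      have : (z : U → ℝ) ≠ 0 := by
        intro hc
        have : z = 0 := Subtype.ext hc
        rw [this, map_zero] at hz
        exact absurd (congrArg Prod.fst hz) (by norm_num)
      exact this h0
    · rw [show ∑ u, (z : U → ℝ) u * a u = linF a (z : U → ℝ) from rfl, hz1]; norm_num
    · rw [show ∑ u, (z : U → ℝ) u * b u = linF b (z : U → ℝ) from rfl, hz2]; norm_num
  · obtain ⟨z, hzmem, hz0⟩ := Submodule.exists_mem_ne_zero_of_ne_bot hker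
    rw [LinearMap.mem_ker] at hzmem
    have hz1 : linF a (z : U → ℝ) = 0 := by
      have := congrArg Prod.fst hzmem
      exact this
    have hz2 : linF b (z : U → ℝ) = 0 := congrArg Prod.snd hzmem
    refine ⟨(z : U → ℝ), ?_, hmemker z, ?_, ?_⟩
    · intro h0
      exact hz0 (Subtype.ext h0)
    · rw [show ∑ u, (z : U → ℝ) u * a u = linF a (z : U → ℝ) from rfl, hz1]
    · rw [show ∑ u, (z : U → ℝ) u * b u = linF b (z : U → ℝ) from rfl, hz2]


/-- Support reduction: we can free one symbol without hurting either objective. -/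
lemma reduce (hcard : Fintype.card (X × Y) + 2 ≤ Fintype.card U)
    (hπ : IsPMF π) (hQ : ∀ u, IsPMF (Q u)) (hbar : ∀ s, ∑ u, π u * Q u s = q s) :
    ∃ π' : U → ℝ, IsPMF π' ∧ (∀ s, ∑ u, π' u * Q u s = q s) ∧
      F1v π' Q ≤ F1v π Q ∧ ∑ u, π u * Hent (Q u) ≤ ∑ u, π' u * Hent (Q u) ∧
      ∃ u₀, π' u₀ = 0 := by
  classical
  by_cases hex : ∃ u₀, π u₀ = 0
  · exact ⟨π, hπ, hbar, le_refl _, le_refl _, hex⟩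
  push_neg at hex
  have hpos : ∀ u, 0 < π u := fun u => lt_of_le_of_ne (hπ.1 u) (Ne.symm (hex u))
  obtain ⟨z, hz0, hker, hza, hzb⟩ :=
    exists_dir hcard Q (fun u => IA (Q u)) (fun u => Hent (Q u))
  have hzsum : ∑ u, z u = 0 := by
    calc ∑ u, z u = ∑ u, z u * ∑ s, Q u s :=
          Finset.sum_congr rfl fun u _ => by rw [(hQ u).2, mul_one]
      _ = ∑ u, ∑ s, z u * Q u s :=
          Finset.sum_congr rfl fun u _ => Finset.mul_sum _ _ _
      _ = ∑ s : X × Y, ∑ u, z u * Q u s := Finset.sum_comm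
      _ = 0 := by simp [hker]
  have hposz : ∃ u, 0 < z u := by
    by_contra hc
    push_neg at hc
    apply hz0
    funext u
    have h0 : ∀ v ∈ Finset.univ, 0 ≤ -z v := fun v _ => neg_nonneg.mpr (hc v)
    have hzero : ∑ v, -z v = 0 := by rw [Finset.sum_neg_distrib, hzsum, neg_zero]
    have := (Finset.sum_eq_zero_iff_of_nonneg h0).mp hzero u (Finset.mem_univ u)
    simpa using this
  obtain ⟨u₁, hu₁⟩ := hposz
  set pos := Finset.univ.filter (fun u => 0 < z u) with hposdef
  have hne : pos.Nonempty := ⟨u₁, by simp [hposdef, hu₁]⟩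
  set t := pos.inf' hne (fun u => π u / z u) with htdef
  have ht_pos : 0 < t := by
    rw [htdef, Finset.lt_inf'_iff]
    intro u hu
    have hzu : 0 < z u := by simpa [hposdef] using hu
    exact div_pos (hpos u) hzu
  set π' : U → ℝ := fun u => π u - t * z u with hπ'def
  have hπ'0 : ∀ u, 0 ≤ π' u := by
    intro u
    rw [hπ'def]
    dsimp only
    by_cases hzu : 0 < z u
    · have hle : t ≤ π u / z u := Finset.inf'_le _ (by simp [hposdef, hzu])
      have := (le_div_iff₀ hzu).mp hle
      linarith
    · push_neg at hzu
      have : t * z u ≤ 0 := mul_nonpos_of_nonneg_of_nonpos ht_pos.le hzu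
      linarith [hπ.1 u]
  have hsum : ∀ f : U → ℝ, ∑ u, π' u * f u = ∑ u, π u * f u - t * ∑ u, z u * f u := by
    intro f
    rw [Finset.mul_sum, ← Finset.sum_sub_distrib]
    exact Finset.sum_congr rfl fun u _ => by rw [hπ'def]; ring
  obtain ⟨u₀, hu₀mem, hu₀⟩ := Finset.exists_mem_eq_inf' hne (fun u => π u / z u)
  have hzu₀ : 0 < z u₀ := by simpa [hposdef] using hu₀mem
  refine ⟨π', ⟨hπ'0, ?_⟩, ?_, ?_, ?_, ⟨u₀, ?_⟩⟩
  · have h := hsum (fun _ => 1)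
    simp only [mul_one] at h
    rw [h, hπ.2, hzsum, mul_zero, sub_zero]
  · intro s
    rw [hsum (fun u => Q u s), hbar s, hker s, mul_zero, sub_zero]
  · rw [F1v, F1v, hsum (fun u => IA (Q u))]
    have : 0 ≤ t * ∑ u, z u * IA (Q u) := mul_nonneg ht_pos.le hza
    linarith
  · rw [hsum (fun u => Hent (Q u))]
    have : t * ∑ u, z u * Hent (Q u) ≤ 0 :=
      mul_nonpos_of_nonneg_of_nonpos ht_pos.le hzb
    linarith
  · rw [hπ'def]
    dsimp only
    rw [htdef, hu₀, div_mul_cancel₀ _ hzu₀.ne', sub_self]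

end Atoms
end Main
end Stmt9A

/-- The two minimax characterizations of the optimal transmission rate coincide:
`min_p max{I(X;Y|U), (I(X;Y|U)+I(X,Y;U))/2} = min_p max{I(X;Y|U), I(X,Y;U)}`,
where `p` ranges over conditional pmfs `p(u|x,y)` with `|U| ≤ |X||Y|+2`. -/
theorem stmt9 {X Y : Type*} [Fintype X] [DecidableEq X] [Fintype Y] [DecidableEq Y]
    (q : X × Y → ℝ) (hq : IsPMF q) :
    sInf { z : ℝ | ∃ w : X → Y → Fin (Fintype.card X * Fintype.card Y + 2) → ℝ,
        CondPMF w ∧ z = max (cmiXY q w) ((cmiXY q w + miXYU q w) / 2) }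
      = sInf { z : ℝ | ∃ w : X → Y → Fin (Fintype.card X * Fintype.card Y + 2) → ℝ,
        CondPMF w ∧ z = max (cmiXY q w) (miXYU q w) } := by
  classical
  have hcard : Fintype.card (X × Y) + 2
      ≤ Fintype.card (Fin (Fintype.card X * Fintype.card Y + 2)) := by
    simp [Fintype.card_prod]
  apply csInf_eq_csInf_of_forall_exists_le
  · rintro x ⟨w, hw, rfl⟩
    obtain ⟨π, Q, hπ, hQ, hbar, hwprod⟩ := Stmt9A.extract hq w hw
    obtain ⟨hv1, hv2⟩ := Stmt9A.vals hπ hQ hbar w hwprod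
    obtain ⟨π', hπ', hbar', hF1le, hHentge, u₀, hu₀⟩ := Stmt9A.reduce hcard hπ hQ hbar
    set f1 := Stmt9A.F1v π Q with hf1def
    set f2 := Stmt9A.F2v q π Q with hf2def
    set f1' := Stmt9A.F1v π' Q with hf1'def
    set f2' := Stmt9A.F2v q π' Q with hf2'def
    have hF2le : f2' ≤ f2 := by
      rw [hf2'def, hf2def, Stmt9A.F2v, Stmt9A.F2v]; linarith
    have hf1'0 : (0:ℝ) ≤ f1' := Stmt9A.F1v_nonneg hπ' hQ
    have hIq0 : (0:ℝ) ≤ Stmt9A.IA q := Stmt9A.IA_nonneg hq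
    by_cases hcase : f2' ≤ f1'
    · obtain ⟨hcond, hspec⟩ := Stmt9A.chanOf_spec hπ' hQ hbar' u₀
      obtain ⟨g1, g2⟩ := Stmt9A.vals hπ' hQ hbar' _ hspec
      refine ⟨max (cmiXY q (Stmt9A.chanOf q π' Q u₀))
        (miXYU q (Stmt9A.chanOf q π' Q u₀)), ⟨_, hcond, rfl⟩, ?_⟩
      rw [g1, g2, hv1, hv2]
      calc max f1' f2' = f1' := max_eq_left hcase
        _ ≤ f1 := hF1le
        _ ≤ max f1 ((f1 + f2) / 2) := le_max_left _ _
    · push_neg at hcase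
      set Iq := Stmt9A.IA q with hIqdef
      have hIle : Iq ≤ f1' + f2' := Stmt9A.IA_le_sum hπ' hQ hbar'
      set lam := Iq / (Iq + (f2' - f1')) with hlam
      have hd : (0:ℝ) < Iq + (f2' - f1') := by linarith
      have hlam0 : (0:ℝ) ≤ lam := div_nonneg hIq0 hd.le
      have hlam1 : lam ≤ 1 := by rw [hlam, div_le_one hd]; linarith
      set π'' := fun u => lam * π' u + (1 - lam) * (if u = u₀ then 1 else 0) with hπ''
      set Q'' := fun u => if u = u₀ then q else Q u with hQ''
      have hQ''pmf : ∀ u, IsPMF (Q'' u) := by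
        intro u
        rw [hQ'']
        dsimp only
        split
        · exact hq
        · exact hQ u
      have hQ''u₀ : Q'' u₀ = q := by rw [hQ'']; simp
      have hsum'' : ∀ g : Fin (Fintype.card X * Fintype.card Y + 2) → ℝ,
          ∑ u, π'' u * g u = lam * ∑ u, π' u * g u + (1 - lam) * g u₀ := by
        intro g
        calc ∑ u, π'' u * g u
            = ∑ u, (lam * (π' u * g u)
              + (1 - lam) * ((if u = u₀ then 1 else 0) * g u)) :=
              Finset.sum_congr rfl fun u _ => by rw [hπ'']; ring
          _ = lam * ∑ u, π' u * g u
              + (1 - lam) * ∑ u, (if u = u₀ then 1 else 0) * g u := by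
              rw [Finset.sum_add_distrib, Finset.mul_sum, Finset.mul_sum]
          _ = lam * ∑ u, π' u * g u + (1 - lam) * g u₀ := by
              congr 1
              congr 1
              simp [ite_mul]
      have hswapF : ∀ F : (X × Y → ℝ) → ℝ,
          ∑ u, π' u * F (Q'' u) = ∑ u, π' u * F (Q u) := by
        intro F
        refine Finset.sum_congr rfl fun u _ => ?_
        by_cases h : u = u₀
        · rw [h, hu₀]; ring
        · rw [hQ'']; simp [h]
      have hπ''pmf : IsPMF π'' := by
        constructor
        · intro u
          rw [hπ'']
          dsimp only
          have : (0:ℝ) ≤ (if u = u₀ then (1:ℝ) else 0) := by split <;> norm_num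
          have h1 : (0:ℝ) ≤ lam * π' u := mul_nonneg hlam0 (hπ'.1 u)
          nlinarith
        · have h := hsum'' (fun _ => 1)
          simp only [mul_one] at h
          rw [h, hπ'.2]
          ring
      have hbar'' : ∀ s, ∑ u, π'' u * Q'' u s = q s := by
        intro s
        rw [hsum'' (fun u => Q'' u s), hswapF (fun μ => μ s), hbar' s, hQ''u₀]
        ring
      have hF1'' : Stmt9A.F1v π'' Q'' = lam * f1' + (1 - lam) * Iq := by
        rw [Stmt9A.F1v, hsum'' (fun u => Stmt9A.IA (Q'' u)),
          hswapF (fun μ => Stmt9A.IA μ), hQ''u₀, hf1'def, Stmt9A.F1v, hIqdef]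
      have hF2'' : Stmt9A.F2v q π'' Q'' = lam * f2' := by
        rw [Stmt9A.F2v, hsum'' (fun u => Stmt9A.Hent (Q'' u)),
          hswapF (fun μ => Stmt9A.Hent μ), hQ''u₀, hf2'def, Stmt9A.F2v]
        ring
      have heq : lam * f1' + (1 - lam) * Iq = lam * f2' := by
        rw [hlam]
        field_simp
        ring
      obtain ⟨hcond, hspec⟩ := Stmt9A.chanOf_spec hπ''pmf hQ''pmf hbar'' u₀
      obtain ⟨g1, g2⟩ := Stmt9A.vals hπ''pmf hQ''pmf hbar'' _ hspec
      refine ⟨max (cmiXY q (Stmt9A.chanOf q π'' Q'' u₀))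
        (miXYU q (Stmt9A.chanOf q π'' Q'' u₀)), ⟨_, hcond, rfl⟩, ?_⟩
      rw [g1, g2, hv1, hv2, hF1'', hF2'', heq, max_self]
      have hkey : lam * f2' ≤ (f1' + f2') / 2 := by
        have hprod : (0:ℝ) ≤ (f2' - f1') * (f1' + f2' - Iq) :=
          mul_nonneg (by linarith) (by linarith)
        rw [hlam, div_mul_eq_mul_div, div_le_div_iff₀ hd (by norm_num : (0:ℝ) < 2)]
        nlinarith [hprod]
      calc lam * f2' ≤ (f1' + f2') / 2 := hkey
        _ ≤ (f1 + f2) / 2 := by linarith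
        _ ≤ max f1 ((f1 + f2) / 2) := le_max_right _ _
  · rintro y ⟨w, hw, rfl⟩
    refine ⟨max (cmiXY q w) ((cmiXY q w + miXYU q w) / 2), ⟨w, hw, rfl⟩, ?_⟩
    have h1 := le_max_left (cmiXY q w) (miXYU q w)
    have h2 := le_max_right (cmiXY q w) (miXYU q w)
    apply max_le (le_max_left _ _)
    linarith
end
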